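/- The softmax probability is bounded below by the one-vs-each product of sigmoids: exp(f_c) / Σ_{c'} exp(f_{c'}) ≥ Π_{c' ≠ c} σ(f_c - f_{c'}), where σ(x) = 1/(1+e^{-x}). -/
import Mathlib

lemma aux_one_add_sum_le_prod {α : Type*} [DecidableEq α] (s : Finset α) (a : α → ℝ)
    (h : ∀ i ∈ s, 0 ≤ a i) : 1 + ∑ i ∈ s, a i ≤ ∏ i ∈ s, (1 + a i) := by
  induction s using Finset.induction_on with
  | empty => simp
  | @insert x s hx ih =>
    rw [Finset.sum_insert hx, Finset.prod_insert hx]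
    have hax : 0 ≤ a x := h x (Finset.mem_insert_self _ _)
    have hs : ∀ i ∈ s, 0 ≤ a i := fun i hi => h i (Finset.mem_insert_of_mem hi)
    have h1 := ih hs
    have hsum : 0 ≤ ∑ i ∈ s, a i := Finset.sum_nonneg hs
    nlinarith [ih hs]

theorem stmt1 (C : ℕ) (f : Fin C → ℝ) (c : Fin C) :
    ∏ c' ∈ Finset.univ.filter (fun c' => c' ≠ c), (1 / (1 + Real.exp (-(f c - f c')))) ≤
      Real.exp (f c) / ∑ c', Real.exp (f c') := by
  set g : Fin C → ℝ := fun c' => Real.exp (f c' - f c) with hg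
  have hgpos : ∀ c', 0 < g c' := fun c' => Real.exp_pos _
  have key : ∀ c', -(f c - f c') = f c' - f c := by intro c'; ring
  have hrw : ∀ c' ∈ Finset.univ.filter (fun c' => c' ≠ c),
      (1 / (1 + Real.exp (-(f c - f c')))) = 1 / (1 + g c') := by
    intro c' _; rw [key]
  rw [Finset.prod_congr rfl hrw]
  have hprodpos : 0 < ∏ c' ∈ Finset.univ.filter (fun c' => c' ≠ c), (1 + g c') :=
    Finset.prod_pos (fun i _ => by positivity)
  rw [Finset.prod_div_distrib, Finset.prod_const_one]
  have hsumpos : 0 < ∑ c', Real.exp (f c') :=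
    Finset.sum_pos (fun i _ => Real.exp_pos _) ⟨c, Finset.mem_univ c⟩
  rw [div_le_div_iff₀ hprodpos hsumpos, one_mul]
  -- Σ exp(f c') ≤ exp (f c) * ∏ (1 + g c')
  have hsplit : ∑ c', Real.exp (f c') = Real.exp (f c) * ∑ c', g c' := by
    rw [Finset.mul_sum]
    refine Finset.sum_congr rfl fun i _ => ?_
    rw [hg]; simp [← Real.exp_add]
  rw [hsplit]
  have hexp : (0:ℝ) < Real.exp (f c) := Real.exp_pos _
  apply mul_le_mul_of_nonneg_left _ hexp.le
  have hsum : ∑ c', g c' = g c + ∑ c' ∈ Finset.univ.filter (fun c' => c' ≠ c), g c' := by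
    rw [Finset.filter_ne']
    exact (Finset.add_sum_erase _ g (Finset.mem_univ c)).symm
  have hgc : g c = 1 := by simp [hg]
  rw [hsum, hgc]
  exact aux_one_add_sum_le_prod _ _ (fun i _ => (hgpos i).le)
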